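/- Under the stated setup, let I ⊆ A be an ideal and a ∈ A. Then the following are equivalent: (1) (D_{i_1} ∘ ⋯ ∘ D_{i_m})(a) ∈ I for all m ≥ 0 and all i_1,…,i_m ∈ {1,…,n} (the case m = 0 meaning a ∈ I); (2) the composite map A → H ⊗_k A → H ⊗_k (A/I), given by φ followed by the quotient in the second factor, sends a to zero. -/

import Mathlib

open TensorProduct

noncomputable section

variable {k : Type*} [Field k] {n : ℕ}
variable {A : Type*} [CommRing A] [Algebra k A]

/-- The coefficient-extraction linear map `k[u₁,…,u_n] → k`. -/
def lcoeffMv (k : Type*) [CommSemiring k] {n : ℕ} (β : Fin n →₀ ℕ) :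
    MvPolynomial (Fin n) k →ₗ[k] k where
  toFun p := MvPolynomial.coeff β p
  map_add' p q := MvPolynomial.coeff_add β p q
  map_smul' c p := by simp [MvPolynomial.coeff_smul]

/-- Evaluation at `u = 0`, a `k`-algebra map `k[u₁,…,u_n] → k`. -/
def evalZero (k : Type*) [CommSemiring k] (n : ℕ) : MvPolynomial (Fin n) k →ₐ[k] k :=
  MvPolynomial.aeval 0

/-- Extraction of the coefficient of `u^α` in the first tensor factor:
for `φ(f) = Σ_α u^α ⊗ f_α`, this sends `φ(f)` to `f_α`. -/
def coeffFst (k : Type*) [Field k] {n : ℕ} (A : Type*) [CommRing A] [Algebra k A]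
    (α : Fin n →₀ ℕ) : (MvPolynomial (Fin n) k ⊗[k] A) →ₗ[k] A :=
  (TensorProduct.lid k A).toLinearMap ∘ₗ TensorProduct.map (lcoeffMv k α) LinearMap.id

/-- The operator `D_i : A → A`, `f ↦ f_{e_i}`. -/
def Dop (φ : A →ₐ[k] MvPolynomial (Fin n) k ⊗[k] A) (i : Fin n) (f : A) : A :=
  coeffFst k A (Finsupp.single i 1) (φ f)

namespace S18

open MvPolynomial Finset

variable {n : ℕ}
variable {M N : Type*} [AddCommGroup M] [Module k M] [AddCommGroup N] [Module k N]

local notation "H" => MvPolynomial (Fin n) k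

lemma lcoeffMv_apply (α : Fin n →₀ ℕ) (p : H) : lcoeffMv k α p = coeff α p := rfl

/-- coefficient extraction on the first tensor factor, for any module -/
def cfa (α : Fin n →₀ ℕ) : (H ⊗[k] M) →ₗ[k] M :=
  (TensorProduct.lid k M).toLinearMap ∘ₗ TensorProduct.map (lcoeffMv k α) LinearMap.id

@[simp] lemma cfa_tmul (α : Fin n →₀ ℕ) (p : H) (m : M) :
    cfa α (p ⊗ₜ[k] m) = coeff α p • m := by
  simp [cfa, lcoeffMv_apply]

lemma cfa_decomp (t : H ⊗[k] M) : ∃ s : Finset (Fin n →₀ ℕ),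
    (∀ α, α ∉ s → cfa α t = 0) ∧
    t = ∑ α ∈ s, monomial α (1 : k) ⊗ₜ[k] cfa α t := by
  classical
  induction t with
  | zero => exact ⟨∅, by simp, by simp⟩
  | tmul p m =>
    refine ⟨p.support, ?_, ?_⟩
    · intro α hα
      simp [cfa_tmul, MvPolynomial.notMem_support_iff.mp hα]
    · have : ∀ α ∈ p.support,
          monomial α (1 : k) ⊗ₜ[k] cfa α (p ⊗ₜ[k] m) = (monomial α (coeff α p)) ⊗ₜ[k] m := by
        intro α _
        rw [cfa_tmul, tmul_smul, smul_tmul', smul_monomial, smul_eq_mul, mul_one]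
      rw [Finset.sum_congr rfl this, ← TensorProduct.sum_tmul, support_sum_monomial_coeff]
  | add x y hx hy =>
    obtain ⟨sx, hx0, hxd⟩ := hx
    obtain ⟨sy, hy0, hyd⟩ := hy
    refine ⟨sx ∪ sy, ?_, ?_⟩
    · intro α hα
      rw [Finset.mem_union] at hα
      push_neg at hα
      rw [map_add, hx0 α hα.1, hy0 α hα.2, add_zero]
    · have : ∀ α ∈ sx ∪ sy,
          monomial α (1 : k) ⊗ₜ[k] cfa α (x + y)
          = monomial α (1 : k) ⊗ₜ[k] cfa α x + monomial α (1 : k) ⊗ₜ[k] cfa α y := by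
        intro α _
        rw [map_add, tmul_add]
      rw [Finset.sum_congr rfl this, Finset.sum_add_distrib]
      congr 1
      · rw [← Finset.sum_subset Finset.subset_union_left
            (fun α _ hα => by rw [hx0 α hα, tmul_zero])]
        exact hxd
      · rw [← Finset.sum_subset Finset.subset_union_right
            (fun α _ hα => by rw [hy0 α hα, tmul_zero])]
        exact hyd

lemma eq_zero_of_cfa (t : H ⊗[k] M) (h : ∀ α, cfa α t = 0) : t = 0 := by
  obtain ⟨s, _, hd⟩ := cfa_decomp t
  rw [hd]
  exact Finset.sum_eq_zero fun α _ => by rw [h α, tmul_zero]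

lemma cfa_map_right (g : M →ₗ[k] N) (α : Fin n →₀ ℕ) (t : H ⊗[k] M) :
    cfa α (TensorProduct.map LinearMap.id g t) = g (cfa α t) := by
  induction t with
  | zero => simp
  | tmul p m => simp
  | add x y hx hy => simp [hx, hy]

lemma cfa_map_left (p : H →ₗ[k] H) (γ : Fin n →₀ ℕ) (s : Finset (Fin n →₀ ℕ)) (t : H ⊗[k] M)
    (ht : t = ∑ α ∈ s, monomial α (1 : k) ⊗ₜ[k] cfa α t) :
    cfa γ (TensorProduct.map p LinearMap.id t)
      = ∑ α ∈ s, coeff γ (p (monomial α (1 : k))) • cfa α t := by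
  conv_lhs => rw [ht]
  rw [map_sum, map_sum]
  exact Finset.sum_congr rfl fun α _ => by simp

/-- total degree of a multi-index -/
def deg (β : Fin n →₀ ℕ) : ℕ := β.sum fun _ e => e

lemma deg_add (a b : Fin n →₀ ℕ) : deg (a + b) = deg a + deg b :=
  Finsupp.sum_add_index' (fun _ => rfl) (fun _ _ _ => rfl)

@[simp] lemma deg_zero : deg (0 : Fin n →₀ ℕ) = 0 := by simp [deg]

@[simp] lemma deg_single (i : Fin n) (m : ℕ) : deg (Finsupp.single i m) = m :=
  Finsupp.sum_single_index rfl

lemma eq_zero_of_deg_eq_zero {β : Fin n →₀ ℕ} (h : deg β = 0) : β = 0 := by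
  classical
  ext i
  by_cases hi : i ∈ β.support
  · exact (Finset.sum_eq_zero_iff.mp h i hi)
  · simpa using Finsupp.notMem_support_iff.mp hi

lemma deg_le_of_le {a b : Fin n →₀ ℕ} (h : a ≤ b) : deg a ≤ deg b := by
  have := deg_add a (b - a)
  rw [← tsub_add_cancel_of_le h, deg_add]
  omega

lemma deg_tsub {a b : Fin n →₀ ℕ} (h : b ≤ a) : deg (a - b) = deg a - deg b := by
  have h2 : a - b + b = a := tsub_add_cancel_of_le h
  have h3 := deg_add (a - b) b
  rw [h2] at h3
  omega
  
/-- bicoefficient extraction on `H ⊗ H` -/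
def bic (σ τ : Fin n →₀ ℕ) : (H ⊗[k] H) →ₗ[k] k :=
  (lcoeffMv k τ) ∘ₗ cfa σ

@[simp] lemma bic_tmul (σ τ : Fin n →₀ ℕ) (p q : H) :
    bic σ τ (p ⊗ₜ[k] q) = coeff σ p * coeff τ q := by
  simp [bic, lcoeffMv_apply, smul_eq_mul, mul_comm]

lemma bic_mul (σ τ : Fin n →₀ ℕ) (x y : H ⊗[k] H) :
    bic σ τ (x * y) = ∑ p ∈ Finset.HasAntidiagonal.antidiagonal σ, ∑ q ∈ Finset.HasAntidiagonal.antidiagonal τ,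
      bic p.1 q.1 x * bic p.2 q.2 y := by
  classical
  induction x with
  | zero => simp
  | add x1 x2 h1 h2 =>
    simp only [add_mul, map_add, h1, h2, ← Finset.sum_add_distrib]
  | tmul p1 q1 =>
    induction y with
    | zero => simp
    | add y1 y2 g1 g2 =>
      simp only [mul_add, map_add, g1, g2, ← Finset.sum_add_distrib]
    | tmul p2 q2 =>
      rw [Algebra.TensorProduct.tmul_mul_tmul, bic_tmul, coeff_mul, coeff_mul,
        Finset.sum_mul_sum]
      exact Finset.sum_congr rfl fun p _ => Finset.sum_congr rfl fun q _ => by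
        rw [bic_tmul, bic_tmul]; ring

section AlgTranslate

variable {B C : Type*} [CommRing B] [Algebra k B] [CommRing C] [Algebra k C]

lemma alg_lid_eval (t : H ⊗[k] B) :
    Algebra.TensorProduct.lid k B
      (Algebra.TensorProduct.map (evalZero k n) (AlgHom.id k B) t) = cfa 0 t := by
  induction t with
  | zero => simp
  | tmul p m => simp [evalZero, constantCoeff_eq]
  | add x y hx hy => simp [hx, hy]

lemma alg_rid_eval (σ : Fin n →₀ ℕ) (t : H ⊗[k] H) :
    coeff σ (Algebra.TensorProduct.rid k k (MvPolynomial (Fin n) k)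
      (Algebra.TensorProduct.map (AlgHom.id k (MvPolynomial (Fin n) k)) (evalZero k n) t))
      = bic σ 0 t := by
  induction t with
  | zero => simp
  | tmul p q => simp [evalZero, constantCoeff_eq, coeff_smul, mul_comm]
  | add x y hx hy => simp [hx, hy]

lemma cfa_algmap (g : B →ₐ[k] C) (α : Fin n →₀ ℕ) (t : H ⊗[k] B) :
    cfa α (Algebra.TensorProduct.map (AlgHom.id k (MvPolynomial (Fin n) k)) g t)
      = g (cfa α t) := by
  induction t with
  | zero => simp
  | tmul p m => simp [map_smul]
  | add x y hx hy => simp [hx, hy]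

lemma cfa_assoc_mu (μ : MvPolynomial (Fin n) k →ₐ[k] MvPolynomial (Fin n) k ⊗[k] MvPolynomial (Fin n) k)
    (γ : Fin n →₀ ℕ) (t : H ⊗[k] B) :
    cfa γ ((Algebra.TensorProduct.assoc k k k (MvPolynomial (Fin n) k) (MvPolynomial (Fin n) k) B)
        (Algebra.TensorProduct.map μ (AlgHom.id k B) t))
      = TensorProduct.map (cfa γ ∘ₗ μ.toLinearMap) LinearMap.id t := by
  have key : ∀ (q : H ⊗[k] H) (f : B),
      cfa γ ((Algebra.TensorProduct.assoc k k k (MvPolynomial (Fin n) k) (MvPolynomial (Fin n) k) B)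
        (q ⊗ₜ[k] f)) = (cfa γ q) ⊗ₜ[k] f := by
    intro q f
    induction q with
    | zero => simp
    | tmul p1 p2 => rw [Algebra.TensorProduct.assoc_tmul]; simp [smul_tmul']
    | add x y hx hy => simp [add_tmul, hx, hy]
  induction t with
  | zero => simp
  | tmul p f => simp [key]
  | add x y hx hy => simp [hx, hy]

end AlgTranslate

lemma X_eq_monomial (j : Fin n) : (X j : H) = monomial (Finsupp.single j 1) (1 : k) := rfl

lemma eq_single_split {i : Fin n} {a b : Fin n →₀ ℕ} (h : a + b = Finsupp.single i 1) :
    (a = Finsupp.single i 1 ∧ b = 0) ∨ (a = 0 ∧ b = Finsupp.single i 1) := by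
  classical
  have hcoord : ∀ j, a j + b j = (Finsupp.single i 1) j := fun j => by
    rw [← h]; simp
  have hi := hcoord i
  rw [Finsupp.single_eq_same] at hi
  by_cases hai : a i = 0
  · right
    constructor
    · ext j
      by_cases hj : j = i
      · subst hj; simpa using hai
      · have := hcoord j
        rw [Finsupp.single_eq_of_ne' (Ne.symm hj)] at this
        simpa using Nat.eq_zero_of_add_eq_zero_right this
    · ext j
      by_cases hj : j = i
      · subst hj; rw [Finsupp.single_eq_same]; omega
      · have := hcoord j
        rw [Finsupp.single_eq_of_ne' (Ne.symm hj)] at this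
        rw [Finsupp.single_eq_of_ne' (Ne.symm hj)]
        omega
  · left
    constructor
    · ext j
      by_cases hj : j = i
      · subst hj; rw [Finsupp.single_eq_same]; omega
      · have := hcoord j
        rw [Finsupp.single_eq_of_ne' (Ne.symm hj)] at this
        rw [Finsupp.single_eq_of_ne' (Ne.symm hj)]
        omega
    · ext j
      by_cases hj : j = i
      · subst hj; simp; omega
      · have := hcoord j
        rw [Finsupp.single_eq_of_ne' (Ne.symm hj)] at this
        simp; omega

lemma antidiagonal_single (i : Fin n) :
    Finset.HasAntidiagonal.antidiagonal (Finsupp.single i 1)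
      = {((Finsupp.single i 1 : Fin n →₀ ℕ), (0 : Fin n →₀ ℕ)),
         ((0 : Fin n →₀ ℕ), (Finsupp.single i 1 : Fin n →₀ ℕ))} := by
  classical
  ext q
  simp only [Finset.HasAntidiagonal.mem_antidiagonal, Finset.mem_insert, Finset.mem_singleton]
  constructor
  · intro h
    rcases eq_single_split h with ⟨h1, h2⟩ | ⟨h1, h2⟩
    · left; exact Prod.ext h1 h2
    · right; exact Prod.ext h1 h2
  · rintro (h | h) <;> rw [h] <;> simp

lemma sum_pick_snd (τ c : Fin n →₀ ℕ) (g : (Fin n →₀ ℕ) → k) :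
    (∑ q ∈ Finset.HasAntidiagonal.antidiagonal τ, g q.1 * (if c = q.2 then (1 : k) else 0))
      = if c ≤ τ then g (τ - c) else 0 := by
  classical
  by_cases h : c ≤ τ
  · rw [if_pos h, Finset.sum_eq_single_of_mem ((τ - c, c) : _ × _)
      (Finset.HasAntidiagonal.mem_antidiagonal.mpr (tsub_add_cancel_of_le h))]
    · simp
    · rintro ⟨q1, q2⟩ hq hne
      rw [Finset.HasAntidiagonal.mem_antidiagonal] at hq
      by_cases hc : c = q2
      · exfalso
        apply hne
        subst hc
        have : q1 = τ - c := eq_tsub_of_add_eq hq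
        rw [this]
      · simp [hc]
  · rw [if_neg h]
    apply Finset.sum_eq_zero
    rintro ⟨q1, q2⟩ hq
    rw [Finset.HasAntidiagonal.mem_antidiagonal] at hq
    have : ¬ c = q2 := by
      rintro rfl
      exact h (hq ▸ le_add_self)
    simp [this]

lemma sum_pick_fst (τ c : Fin n →₀ ℕ) (g : (Fin n →₀ ℕ) → k) :
    (∑ q ∈ Finset.HasAntidiagonal.antidiagonal τ, (if c = q.1 then (1 : k) else 0) * g q.2)
      = if c ≤ τ then g (τ - c) else 0 := by
  classical
  by_cases h : c ≤ τ
  · rw [if_pos h, Finset.sum_eq_single_of_mem ((c, τ - c) : _ × _)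
      (Finset.HasAntidiagonal.mem_antidiagonal.mpr (add_tsub_cancel_of_le h))]
    · simp
    · rintro ⟨q1, q2⟩ hq hne
      rw [Finset.HasAntidiagonal.mem_antidiagonal] at hq
      by_cases hc : c = q1
      · exfalso
        apply hne
        subst hc
        have : q2 = τ - c := eq_tsub_of_add_eq (by rw [add_comm]; exact hq)
        rw [this]
      · simp [hc]
  · rw [if_neg h]
    apply Finset.sum_eq_zero
    rintro ⟨q1, q2⟩ hq
    rw [Finset.HasAntidiagonal.mem_antidiagonal] at hq
    have : ¬ c = q1 := by
      rintro rfl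
      exact h (hq ▸ le_self_add)
    simp [this]

section MuLemmas

variable (μ : MvPolynomial (Fin n) k →ₐ[k] MvPolynomial (Fin n) k ⊗[k] MvPolynomial (Fin n) k)
variable (hL : ∀ (p : MvPolynomial (Fin n) k) (τ' : Fin n →₀ ℕ), bic 0 τ' (μ p) = coeff τ' p)
variable (hR : ∀ (p : MvPolynomial (Fin n) k) (σ' : Fin n →₀ ℕ), bic σ' 0 (μ p) = coeff σ' p)

include hL in
lemma mu_lowdeg : ∀ (m : ℕ) (β σ τ : Fin n →₀ ℕ), deg β = m → deg σ + deg τ < m →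
    bic σ τ (μ (monomial β (1 : k))) = 0 := by
  classical
  intro m
  induction m with
  | zero => intro β σ τ _ h; omega
  | succ m ih =>
    intro β σ τ hβ hlt
    have hβne : β ≠ 0 := by
      rintro rfl
      simp at hβ
    obtain ⟨j, hj⟩ := Finsupp.support_nonempty_iff.mpr hβne
    have hjne : β j ≠ 0 := Finsupp.mem_support_iff.mp hj
    have hsle : Finsupp.single j 1 ≤ β := Finsupp.single_le_iff.mpr (Nat.one_le_iff_ne_zero.mpr hjne)
    set β' := β - Finsupp.single j 1 with hβ'def
    have hβsplit : β' + Finsupp.single j 1 = β := tsub_add_cancel_of_le hsle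
    have hdegβ' : deg β' = m := by
      have h1 := deg_add β' (Finsupp.single j 1)
      rw [hβsplit, deg_single] at h1
      omega
    have hmono : (monomial β (1 : k) : H) = monomial β' 1 * X j := by
      rw [X_eq_monomial, monomial_mul, mul_one, hβsplit]
    rw [hmono, map_mul, bic_mul]
    apply Finset.sum_eq_zero
    rintro ⟨p1, p2⟩ hp
    apply Finset.sum_eq_zero
    rintro ⟨q1, q2⟩ hq
    rw [Finset.HasAntidiagonal.mem_antidiagonal] at hp hq
    by_cases h2 : p2 = 0 ∧ q2 = 0
    · have : bic p2 q2 (μ (X j)) = 0 := by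
        rw [h2.1, h2.2, hL, X_eq_monomial, coeff_monomial]
        have : ¬ (Finsupp.single j 1 = (0 : Fin n →₀ ℕ)) := fun h => one_ne_zero (Finsupp.single_eq_zero.mp h)
        simp [this]
      rw [this, mul_zero]
    · have hge : 1 ≤ deg p2 + deg q2 := by
        rcases not_and_or.mp h2 with h | h
        · have : deg p2 ≠ 0 := fun hz => h (eq_zero_of_deg_eq_zero hz)
          omega
        · have : deg q2 ≠ 0 := fun hz => h (eq_zero_of_deg_eq_zero hz)
          omega
      have hs : deg p1 + deg p2 = deg σ := by rw [← hp, deg_add]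
      have ht : deg q1 + deg q2 = deg τ := by rw [← hq, deg_add]
      rw [ih β' p1 q1 hdegβ' (by omega), zero_mul]

include hL hR in
lemma mu_boundary : ∀ (m : ℕ) (β τ : Fin n →₀ ℕ) (i : Fin n), deg β = m → deg τ + 1 = m →
    bic (Finsupp.single i 1) τ (μ (monomial β (1 : k)))
      = if Finsupp.single i 1 + τ = β then (β i : k) else 0 := by
  classical
  intro m
  induction m with
  | zero => intro β τ i _ h; omega
  | succ m ih =>
    intro β τ i hβ hτ
    have hdegτ : deg τ = m := by omega
    have hβne : β ≠ 0 := by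
      rintro rfl
      simp at hβ
    obtain ⟨j, hj⟩ := Finsupp.support_nonempty_iff.mpr hβne
    have hjne : β j ≠ 0 := Finsupp.mem_support_iff.mp hj
    have hsle : Finsupp.single j 1 ≤ β := Finsupp.single_le_iff.mpr (Nat.one_le_iff_ne_zero.mpr hjne)
    set β' := β - Finsupp.single j 1 with hβ'def
    have hβsplit : β' + Finsupp.single j 1 = β := tsub_add_cancel_of_le hsle
    have hdegβ' : deg β' = m := by
      have h1 := deg_add β' (Finsupp.single j 1)
      rw [hβsplit, deg_single] at h1
      omega
    have hmono : (monomial β (1 : k) : H) = monomial β' 1 * X j := by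
      rw [X_eq_monomial, monomial_mul, mul_one, hβsplit]
    rw [hmono, map_mul, bic_mul, antidiagonal_single,
      Finset.sum_insert (by
        simp only [Finset.mem_singleton, Prod.mk.injEq, not_and]
        intro h
        exact absurd h (fun h => one_ne_zero (Finsupp.single_eq_zero.mp h))),
      Finset.sum_singleton]
    -- first double-sum term: p = (single i 1, 0); second: p = (0, single i 1)
    have termA : (∑ q ∈ Finset.HasAntidiagonal.antidiagonal τ,
        bic (Finsupp.single i 1) q.1 (μ (monomial β' 1)) * bic 0 q.2 (μ (X j)))
        = if Finsupp.single j 1 ≤ τ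
            then bic (Finsupp.single i 1) (τ - Finsupp.single j 1) (μ (monomial β' 1)) else 0 := by
      rw [← sum_pick_snd τ (Finsupp.single j 1)
        (fun σ => bic (Finsupp.single i 1) σ (μ (monomial β' 1)))]
      apply Finset.sum_congr rfl
      intro q _
      rw [hL, X_eq_monomial, coeff_monomial]
    have termB : (∑ q ∈ Finset.HasAntidiagonal.antidiagonal τ,
        bic 0 q.1 (μ (monomial β' 1)) * bic (Finsupp.single i 1) q.2 (μ (X j)))
        = if β' ≤ τ then bic (Finsupp.single i 1) (τ - β') (μ (X j)) else 0 := by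
      rw [← sum_pick_fst τ β' (fun τ2 => bic (Finsupp.single i 1) τ2 (μ (X j)))]
      apply Finset.sum_congr rfl
      intro q _
      rw [hL, coeff_monomial]
    rw [termA, termB]
    -- evaluate termB fully
    have termB' : (if β' ≤ τ then bic (Finsupp.single i 1) (τ - β') (μ (X j)) else 0)
        = if τ = β' then (if i = j then (1 : k) else 0) else 0 := by
      by_cases hτβ : τ = β'
      · subst hτβ
        rw [if_pos le_rfl, if_pos rfl, tsub_self, hR, X_eq_monomial, coeff_monomial]
        by_cases hij : i = j
        · subst hij; simp
        · have : ¬ (Finsupp.single j 1 = Finsupp.single i 1) := by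
            intro h
            exact hij (by
              have := (Finsupp.single_eq_single_iff j i 1 1).mp h
              rcases this with ⟨h1, _⟩ | ⟨h1, _⟩
              · exact h1.symm
              · exact absurd h1 one_ne_zero)
          simp [this, hij]
      · rw [if_neg hτβ]
        by_cases hle : β' ≤ τ
        · exfalso
          apply hτβ
          have hdsub : deg (τ - β') = 0 := by
            rw [deg_tsub hle, hdegτ, hdegβ']
            omega
          have : τ - β' = 0 := eq_zero_of_deg_eq_zero hdsub
          have := tsub_add_cancel_of_le hle
          rw [‹τ - β' = 0›, zero_add] at this
          exact this.symm
        · rw [if_neg hle]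
    rw [termB']
    -- evaluate termA using ih when in range
    by_cases hc : Finsupp.single i 1 + τ = β
    · rw [if_pos hc]
      by_cases hij : i = j
      · have hτβ' : τ = β' := by
          have h2 : Finsupp.single i 1 + τ = Finsupp.single i 1 + β' := by
            rw [hc, ← hβsplit, hij, add_comm]
          exact add_left_cancel h2
        rw [if_pos hτβ', if_pos hij]
        have hβi : β i = β' i + 1 := by
          rw [← hβsplit, Finsupp.add_apply, ← hij, Finsupp.single_eq_same]
        by_cases hb : Finsupp.single j 1 ≤ τ
        · rw [if_pos hb, ih β' (τ - Finsupp.single j 1) i hdegβ'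
            (by
              have h5 := deg_le_of_le hb
              rw [deg_single] at h5
              rw [deg_tsub hb, deg_single, hdegτ]
              omega)]
          have hcond : Finsupp.single i 1 + (τ - Finsupp.single j 1) = β' := by
            rw [hij, add_comm, tsub_add_cancel_of_le hb, hτβ']
          rw [if_pos hcond, hβi]
          push_cast
          ring
        · rw [if_neg hb]
          have hzero : β' i = 0 := by
            by_contra hne
            apply hb
            rw [hτβ', ← hij]
            exact Finsupp.single_le_iff.mpr (Nat.one_le_iff_ne_zero.mpr hne)
          rw [hβi, hzero]
          norm_num
      · -- i ≠ j
        have hτj : τ j = β' j + 1 := by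
          have h1 := DFunLike.congr_fun hc j
          rw [Finsupp.add_apply, Finsupp.single_eq_of_ne' hij] at h1
          have h2 : β j = β' j + 1 := by
            have h3 := DFunLike.congr_fun hβsplit j
            rw [Finsupp.add_apply, Finsupp.single_eq_same] at h3
            omega
          omega
        have hjτ : Finsupp.single j 1 ≤ τ := Finsupp.single_le_iff.mpr (by omega)
        rw [if_pos hjτ]
        have hcond : Finsupp.single i 1 + (τ - Finsupp.single j 1) = β' := by
          have h1 : Finsupp.single i 1 + τ = β' + Finsupp.single j 1 := by rw [hc, ← hβsplit]
          have h2 : Finsupp.single i 1 + τ - Finsupp.single j 1 = β' := by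
            rw [h1, add_tsub_cancel_right]
          rw [← h2, add_tsub_assoc_of_le hjτ]
        rw [ih β' (τ - Finsupp.single j 1) i hdegβ'
          (by
            have h5 := deg_le_of_le hjτ
            rw [deg_single] at h5
            rw [deg_tsub hjτ, deg_single, hdegτ]
            omega), if_pos hcond]
        have hβi : β i = β' i := by
          rw [← hβsplit, Finsupp.add_apply, Finsupp.single_eq_of_ne' (Ne.symm hij), add_zero]
        have hB0 : (if τ = β' then (if i = j then (1 : k) else 0) else 0) = 0 := by
          split
          · simp [hij]
          · rfl
        rw [hB0, hβi, add_zero]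
    · rw [if_neg hc]
      have hA0 : (if Finsupp.single j 1 ≤ τ
          then bic (Finsupp.single i 1) (τ - Finsupp.single j 1) (μ (monomial β' 1)) else 0) = 0 := by
        by_cases hjτ : Finsupp.single j 1 ≤ τ
        · rw [if_pos hjτ, ih β' (τ - Finsupp.single j 1) i hdegβ'
            (by
            have h5 := deg_le_of_le hjτ
            rw [deg_single] at h5
            rw [deg_tsub hjτ, deg_single, hdegτ]
            omega)]
          have : ¬ (Finsupp.single i 1 + (τ - Finsupp.single j 1) = β') := by
            intro h
            apply hc
            have h2 : Finsupp.single i 1 + (τ - Finsupp.single j 1) + Finsupp.single j 1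
                = β' + Finsupp.single j 1 := by rw [h]
            rw [add_assoc, tsub_add_cancel_of_le hjτ, hβsplit] at h2
            exact h2
          rw [if_neg this]
        · rw [if_neg hjτ]
      have hB0 : (if τ = β' then (if i = j then (1 : k) else 0) else 0) = 0 := by
        by_cases hτβ : τ = β'
        · rw [if_pos hτβ]
          have : ¬ i = j := by
            intro hij
            apply hc
            rw [hij, hτβ, add_comm, hβsplit]
          simp [this]
        · rw [if_neg hτβ]
      rw [hA0, hB0, add_zero]

end MuLemmas


lemma coeff_linear (L : MvPolynomial (Fin n) k →ₗ[k] MvPolynomial (Fin n) k)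
    (τ : Fin n →₀ ℕ) (p : H) :
    coeff τ (L p) = ∑ σ ∈ p.support, coeff σ p * coeff τ (L (monomial σ 1)) := by
  conv_lhs => rw [← support_sum_monomial_coeff p]
  rw [map_sum, coeff_sum]
  apply Finset.sum_congr rfl
  intro σ _
  have : (monomial σ) (coeff σ p) = coeff σ p • (monomial σ) (1 : k) := by
    rw [smul_monomial, smul_eq_mul, mul_one]
  rw [this, map_smul, coeff_smul, smul_eq_mul]

section TOps

variable (μ : MvPolynomial (Fin n) k →ₐ[k] MvPolynomial (Fin n) k ⊗[k] MvPolynomial (Fin n) k)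

/-- The operator on `H` induced by `D_i` via `μ`. -/
def Tm (i : Fin n) : MvPolynomial (Fin n) k →ₗ[k] MvPolynomial (Fin n) k :=
  (cfa (Finsupp.single i 1)) ∘ₗ μ.toLinearMap

def Tl : List (Fin n) → (MvPolynomial (Fin n) k →ₗ[k] MvPolynomial (Fin n) k)
  | [] => LinearMap.id
  | i :: l => (Tm μ i) ∘ₗ (Tl l)

lemma coeff_Tm (i : Fin n) (τ : Fin n →₀ ℕ) (p : H) :
    coeff τ (Tm μ i p) = bic (Finsupp.single i 1) τ (μ p) := rfl

def Wt : List (Fin n) → (Fin n →₀ ℕ) → ℕ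
  | [], _ => 1
  | i :: l, τ => (τ i + 1) * Wt l (τ + Finsupp.single i 1)

lemma Wt_pos : ∀ (l : List (Fin n)) (τ : Fin n →₀ ℕ), 0 < Wt l τ := by
  intro l
  induction l with
  | nil => intro τ; exact Nat.one_pos
  | cons i l ih => intro τ; exact Nat.mul_pos (Nat.succ_pos _) (ih _)

def bof : List (Fin n) → (Fin n →₀ ℕ)
  | [] => 0
  | i :: l => bof l + Finsupp.single i 1

lemma deg_bof : ∀ l : List (Fin n), deg (bof l) = l.length := by
  intro l
  induction l with
  | nil => simp [bof]
  | cons i l ih => rw [show bof (i :: l) = bof l + Finsupp.single i 1 from rfl,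
      deg_add, deg_single, ih, List.length_cons]

variable (hL : ∀ (p : MvPolynomial (Fin n) k) (τ' : Fin n →₀ ℕ), bic 0 τ' (μ p) = coeff τ' p)
variable (hR : ∀ (p : MvPolynomial (Fin n) k) (σ' : Fin n →₀ ℕ), bic σ' 0 (μ p) = coeff σ' p)

include hL in
lemma Tl_lowdeg : ∀ (l : List (Fin n)) (τ β : Fin n →₀ ℕ), deg τ + l.length < deg β →
    coeff τ (Tl μ l (monomial β (1 : k))) = 0 := by
  intro l
  induction l with
  | nil =>
    intro τ β h
    rw [show Tl μ [] = LinearMap.id from rfl, LinearMap.id_apply, coeff_monomial,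
      if_neg (fun hh : β = τ => by rw [hh] at h; omega)]
  | cons i l ih =>
    intro τ β h
    rw [List.length_cons] at h
    rw [show Tl μ (i :: l) = (Tm μ i) ∘ₗ (Tl μ l) from rfl, LinearMap.comp_apply,
      coeff_linear (Tm μ i)]
    apply Finset.sum_eq_zero
    intro σ hσ
    have hσsup : coeff σ (Tl μ l (monomial β (1 : k))) ≠ 0 := mem_support_iff.mp hσ
    have hge : deg β ≤ deg σ + l.length := by
      by_contra hlt
      exact hσsup (ih σ β (by omega))
    rw [coeff_Tm, mu_lowdeg μ hL (deg σ) σ (Finsupp.single i 1) τ rfl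
      (by rw [deg_single]; omega), mul_zero]

include hL hR in
lemma Tl_boundary : ∀ (l : List (Fin n)) (τ β : Fin n →₀ ℕ), deg τ + l.length = deg β →
    coeff τ (Tl μ l (monomial β (1 : k)))
      = if τ + bof l = β then (Wt l τ : k) else 0 := by
  intro l
  induction l with
  | nil =>
    intro τ β h
    rw [show Tl μ [] = LinearMap.id from rfl, LinearMap.id_apply, coeff_monomial,
      show bof ([] : List (Fin n)) = 0 from rfl, add_zero,
      show Wt ([] : List (Fin n)) τ = 1 from rfl, Nat.cast_one]
    by_cases hb : τ = β
    · rw [if_pos hb.symm, if_pos hb]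
    · rw [if_neg (fun hh : β = τ => hb hh.symm), if_neg hb]
  | cons i l ih =>
    intro τ β h
    rw [List.length_cons] at h
    rw [show Tl μ (i :: l) = (Tm μ i) ∘ₗ (Tl μ l) from rfl, LinearMap.comp_apply,
      coeff_linear (Tm μ i)]
    rw [Finset.sum_eq_single (τ + Finsupp.single i 1)]
    · rw [ih (τ + Finsupp.single i 1) β (by rw [deg_add, deg_single]; omega),
        coeff_Tm, mu_boundary μ hL hR (deg (τ + Finsupp.single i 1)) (τ + Finsupp.single i 1) τ i
          rfl (by rw [deg_add, deg_single])]
      rw [if_pos (add_comm (Finsupp.single i 1) τ)]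
      have hσ0i : ((τ + Finsupp.single i 1 : Fin n →₀ ℕ)) i = τ i + 1 := by
        rw [Finsupp.add_apply, Finsupp.single_eq_same]
      have hcond2 : (τ + Finsupp.single i 1 + bof l = β) ↔ (τ + bof (i :: l) = β) := by
        rw [show bof (i :: l) = bof l + Finsupp.single i 1 from rfl, ← add_assoc,
          add_right_comm]
      by_cases hB : τ + bof (i :: l) = β
      · rw [if_pos (hcond2.mpr hB), if_pos hB,
          show Wt (i :: l) τ = (τ i + 1) * Wt l (τ + Finsupp.single i 1) from rfl, hσ0i]
        push_cast
        ring
      · rw [if_neg (fun hh => hB (hcond2.mp hh)), if_neg hB, zero_mul]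
    · intro σ hσ hne
      have hσsup : coeff σ (Tl μ l (monomial β (1 : k))) ≠ 0 := mem_support_iff.mp hσ
      have hge : deg β ≤ deg σ + l.length := by
        by_contra hlt
        exact hσsup (Tl_lowdeg μ hL l σ β (by omega))
      by_cases hdeq : deg σ = deg τ + 1
      · rw [coeff_Tm, mu_boundary μ hL hR (deg σ) σ τ i rfl (by omega),
          if_neg (fun hh => hne (by rw [← hh, add_comm])), mul_zero]
      · rw [coeff_Tm, mu_lowdeg μ hL (deg σ) σ (Finsupp.single i 1) τ rfl
          (by rw [deg_single]; omega), mul_zero]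
    · intro hns
      rw [notMem_support_iff.mp hns, zero_mul]

end TOps

lemma exists_list : ∀ (m : ℕ) (α : Fin n →₀ ℕ), deg α = m →
    ∃ l : List (Fin n), bof l = α ∧ l.length = m := by
  intro m
  induction m with
  | zero =>
    intro α h
    exact ⟨[], by rw [eq_zero_of_deg_eq_zero h]; rfl, rfl⟩
  | succ m ih =>
    intro α h
    have hne : α ≠ 0 := by
      rintro rfl
      simp at h
    obtain ⟨i, hi⟩ := Finsupp.support_nonempty_iff.mpr hne
    have hine : α i ≠ 0 := Finsupp.mem_support_iff.mp hi
    have hle : Finsupp.single i 1 ≤ α := Finsupp.single_le_iff.mpr (Nat.one_le_iff_ne_zero.mpr hine)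
    obtain ⟨l, hl1, hl2⟩ := ih (α - Finsupp.single i 1)
      (by rw [deg_tsub hle, deg_single, h]; omega)
    refine ⟨i :: l, ?_, by simp [hl2]⟩
    rw [show bof (i :: l) = bof l + Finsupp.single i 1 from rfl, hl1,
      tsub_add_cancel_of_le hle]

end S18

/-- For an ideal `I ⊆ A` and `a ∈ A`, all iterated composites
`(D_{i_1} ∘ ⋯ ∘ D_{i_m})(a)` lie in `I` iff the composite
`A → H ⊗ₖ A → H ⊗ₖ (A/I)` sends `a` to zero. -/
theorem statement18 [CharZero k]
    (μ : MvPolynomial (Fin n) k →ₐ[k] MvPolynomial (Fin n) k ⊗[k] MvPolynomial (Fin n) k)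
    (hμ1 : ∀ p : MvPolynomial (Fin n) k,
      Algebra.TensorProduct.lid k (MvPolynomial (Fin n) k)
        (Algebra.TensorProduct.map (evalZero k n) (AlgHom.id k (MvPolynomial (Fin n) k)) (μ p)) = p)
    (hμ2 : ∀ p : MvPolynomial (Fin n) k,
      Algebra.TensorProduct.rid k k (MvPolynomial (Fin n) k)
        (Algebra.TensorProduct.map (AlgHom.id k (MvPolynomial (Fin n) k)) (evalZero k n) (μ p)) = p)
    (φ : A →ₐ[k] MvPolynomial (Fin n) k ⊗[k] A)
    (hφ1 : ∀ f : A,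
      Algebra.TensorProduct.lid k A
        (Algebra.TensorProduct.map (evalZero k n) (AlgHom.id k A) (φ f)) = f)
    (hφ2 : ∀ f : A,
      Algebra.TensorProduct.assoc k k k (MvPolynomial (Fin n) k) (MvPolynomial (Fin n) k) A
          (Algebra.TensorProduct.map μ (AlgHom.id k A) (φ f)) =
        Algebra.TensorProduct.map (AlgHom.id k (MvPolynomial (Fin n) k)) φ (φ f))
    (I : Ideal A) (a : A) :
    (∀ l : List (Fin n), l.foldr (fun i x => Dop φ i x) a ∈ I) ↔
      Algebra.TensorProduct.map (AlgHom.id k (MvPolynomial (Fin n) k))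
        (Ideal.Quotient.mkₐ k I) (φ a) = 0 := by
  classical
  have hcf0mu : ∀ p : MvPolynomial (Fin n) k, S18.cfa 0 (μ p) = p := fun p => by
    rw [← S18.alg_lid_eval]; exact hμ1 p
  have hL : ∀ (p : MvPolynomial (Fin n) k) (τ' : Fin n →₀ ℕ),
      S18.bic 0 τ' (μ p) = MvPolynomial.coeff τ' p := fun p τ' => by
    show MvPolynomial.coeff τ' (S18.cfa 0 (μ p)) = MvPolynomial.coeff τ' p
    rw [hcf0mu]
  have hR : ∀ (p : MvPolynomial (Fin n) k) (σ' : Fin n →₀ ℕ),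
      S18.bic σ' 0 (μ p) = MvPolynomial.coeff σ' p := fun p σ' =>
    (S18.alg_rid_eval σ' (μ p)).symm.trans (by rw [hμ2 p])
  have hcf0φ : ∀ f : A, S18.cfa 0 (φ f) = f := fun f => by
    rw [← S18.alg_lid_eval]; exact hφ1 f
  have key : ∀ (i : Fin n) (f : A),
      φ (Dop φ i f) = TensorProduct.map (S18.Tm μ i) LinearMap.id (φ f) := by
    intro i f
    have e1 : Dop φ i f = S18.cfa (Finsupp.single i 1) (φ f) := rfl
    rw [e1, ← S18.cfa_algmap φ (Finsupp.single i 1) (φ f), ← hφ2 f,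
      S18.cfa_assoc_mu μ (Finsupp.single i 1) (φ f)]
    rfl
  have keyl : ∀ l : List (Fin n),
      φ (l.foldr (fun i x => Dop φ i x) a)
        = TensorProduct.map (S18.Tl μ l) LinearMap.id (φ a) := by
    intro l
    induction l with
    | nil =>
      rw [show S18.Tl μ [] = LinearMap.id from rfl, TensorProduct.map_id]
      rfl
    | cons i l ih =>
      rw [show (i :: l).foldr (fun i x => Dop φ i x) a
          = Dop φ i (l.foldr (fun i x => Dop φ i x) a) from rfl, key i _, ih,
        ← LinearMap.comp_apply, ← TensorProduct.map_comp,
        LinearMap.id_comp LinearMap.id]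
      rfl
  obtain ⟨s, hs0, hsd⟩ := S18.cfa_decomp (φ a)
  constructor
  · intro h1
    have main : ∀ (m : ℕ) (α : Fin n →₀ ℕ), S18.deg α = m → S18.cfa α (φ a) ∈ I := by
      intro m
      induction m using Nat.strong_induction_on with
      | _ m ihm =>
        intro α hα
        by_cases hαs : α ∈ s
        · obtain ⟨l, hl1, hl2⟩ := S18.exists_list m α hα
          set F := l.foldr (fun i x => Dop φ i x) a with hF
          have hfold : F ∈ I := h1 l
          have hexp : F = ∑ γ ∈ s,
              MvPolynomial.coeff 0 (S18.Tl μ l (MvPolynomial.monomial γ (1 : k)))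
                • S18.cfa γ (φ a) := by
            conv_lhs => rw [← hcf0φ F]
            rw [keyl l, S18.cfa_map_left (S18.Tl μ l) 0 s (φ a) hsd]
          have hterm : ∀ γ ∈ s.erase α,
              MvPolynomial.coeff 0 (S18.Tl μ l (MvPolynomial.monomial γ (1 : k)))
                • S18.cfa γ (φ a) ∈ I := by
            intro γ hγ
            have hγα : γ ≠ α := Finset.ne_of_mem_erase hγ
            rcases lt_trichotomy (S18.deg γ) m with hlt | heq | hgt
            · exact Submodule.smul_of_tower_mem I _ (ihm (S18.deg γ) hlt γ rfl)
            · rw [S18.Tl_boundary μ hL hR l 0 γ (by rw [S18.deg_zero]; omega),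
                if_neg (by rw [zero_add, hl1]; exact fun hh => hγα hh.symm), zero_smul]
              exact I.zero_mem
            · rw [S18.Tl_lowdeg μ hL l 0 γ (by rw [S18.deg_zero]; omega), zero_smul]
              exact I.zero_mem
          have hco : MvPolynomial.coeff 0 (S18.Tl μ l (MvPolynomial.monomial α (1 : k)))
              = ((S18.Wt l 0 : ℕ) : k) := by
            rw [S18.Tl_boundary μ hL hR l 0 α (by rw [S18.deg_zero]; omega),
              if_pos (by rw [zero_add, hl1])]
          have h7 : ((S18.Wt l 0 : ℕ) : k) • S18.cfa α (φ a)
              = F - ∑ γ ∈ s.erase α,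
                  MvPolynomial.coeff 0 (S18.Tl μ l (MvPolynomial.monomial γ (1 : k)))
                    • S18.cfa γ (φ a) := by
            rw [hexp, ← Finset.add_sum_erase s _ hαs, hco]
            exact (add_sub_cancel_right _ _).symm
          have hmem : ((S18.Wt l 0 : ℕ) : k) • S18.cfa α (φ a) ∈ I := by
            rw [h7]
            exact Submodule.sub_mem I hfold (Submodule.sum_mem I hterm)
          have hne : ((S18.Wt l 0 : ℕ) : k) ≠ 0 :=
            Nat.cast_ne_zero.mpr (S18.Wt_pos l 0).ne'
          have h8 : S18.cfa α (φ a)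
              = ((S18.Wt l 0 : ℕ) : k)⁻¹ • (((S18.Wt l 0 : ℕ) : k) • S18.cfa α (φ a)) := by
            rw [smul_smul, inv_mul_cancel₀ hne, one_smul]
          rw [h8]
          exact Submodule.smul_of_tower_mem I _ hmem
        · rw [hs0 α hαs]
          exact I.zero_mem
    apply S18.eq_zero_of_cfa
    intro α
    rw [S18.cfa_algmap (Ideal.Quotient.mkₐ k I) α (φ a)]
    show Ideal.Quotient.mk I (S18.cfa α (φ a)) = 0
    exact Ideal.Quotient.eq_zero_iff_mem.mpr (main (S18.deg α) α rfl)
  · intro h2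
    have hco : ∀ α : Fin n →₀ ℕ, S18.cfa α (φ a) ∈ I := by
      intro α
      have h3 := S18.cfa_algmap (Ideal.Quotient.mkₐ k I) α (φ a)
      rw [h2, map_zero] at h3
      have h4 : Ideal.Quotient.mk I (S18.cfa α (φ a)) = 0 := h3.symm
      exact Ideal.Quotient.eq_zero_iff_mem.mp h4
    have hQ : ∀ (l : List (Fin n)) (γ : Fin n →₀ ℕ),
        S18.cfa γ (φ (l.foldr (fun i x => Dop φ i x) a)) ∈ I := by
      intro l
      induction l with
      | nil => exact hco
      | cons i l ih =>
        intro γ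
        rw [show (i :: l).foldr (fun i x => Dop φ i x) a
            = Dop φ i (l.foldr (fun i x => Dop φ i x) a) from rfl, key i _]
        obtain ⟨s', _, hsd'⟩ := S18.cfa_decomp (φ (l.foldr (fun i x => Dop φ i x) a))
        rw [S18.cfa_map_left (S18.Tm μ i) γ s' _ hsd']
        exact Submodule.sum_mem I fun γ' _ => Submodule.smul_of_tower_mem I _ (ih γ')
    intro l
    rw [← hcf0φ (l.foldr (fun i x => Dop φ i x) a)]
    exact hQ l 0
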